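/- There exists a right-symmetric (pre-Lie) algebra V and a formal distribution a(z) over V such that the pair (a(z),a(z)) is local (with locality value 1), but the pair (a(z), (a₍₀₎a)(z)) is not local. Concretely, let V = RS(X)/I where RS(X) is the free right-symmetric algebra on X = {aₙ : n ∈ ℤ} and I is the ideal generated by all aₙ∘aₘ − a₀∘a_{n+m} with n ≠ 0; then a(z) = Σₙ (aₙ+I)z^{−n−1} satisfies a(w)∘a(z)(w−z) = 0, yet for every N ∈ ℤ₊ there exist n,m ∈ ℤ with Σ_{s≥0}(−1)^s C(N,s) a_{n−s}∘(a₀∘a_{m+s}) ∉ I. -/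

import Mathlib

abbrev Idx := ℤ ⊕ ℤ ⊕ ℤ × ℤ

noncomputable def fb (k : Type) [Field k] : Idx → Idx → (Idx →₀ k)
  | Sum.inl n, Sum.inl m => Finsupp.single (Sum.inr (Sum.inl (n+m))) 1
  | Sum.inl n, Sum.inr (Sum.inl m) => Finsupp.single (Sum.inr (Sum.inr (n,m))) 1
  | _, _ => 0

noncomputable def mulL (k : Type) [Field k] :
    (Idx →₀ k) →ₗ[k] (Idx →₀ k) →ₗ[k] (Idx →₀ k) :=
  Finsupp.lsum k (fun i => LinearMap.toSpanSingleton k _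
    (Finsupp.lsum k (fun j => LinearMap.toSpanSingleton k _ (fb k i j))))

lemma mul_single (k : Type) [Field k] (i j : Idx) (c d : k) :
    mulL k (Finsupp.single i c) (Finsupp.single j d) = (c * d) • fb k i j := by
  simp [mulL, LinearMap.toSpanSingleton_apply, smul_smul]

lemma rsym_single (k : Type) [Field k] (i j l : Idx) (c d e : k) :
    mulL k (mulL k (Finsupp.single i c) (Finsupp.single j d)) (Finsupp.single l e)
      - mulL k (Finsupp.single i c) (mulL k (Finsupp.single j d) (Finsupp.single l e))
    = mulL k (mulL k (Finsupp.single i c) (Finsupp.single l e)) (Finsupp.single j d)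
      - mulL k (Finsupp.single i c) (mulL k (Finsupp.single l e) (Finsupp.single j d)) := by
  rcases i with n | m | p <;> rcases j with n2 | m2 | p2 <;> rcases l with n3 | m3 | p3 <;>
    simp only [mul_single, fb, map_smul, LinearMap.smul_apply, map_zero,
      LinearMap.zero_apply, smul_zero, zero_smul, smul_smul, sub_zero, zero_sub,
      sub_self, one_mul, mul_one] <;>
    simp [mul_single, fb, smul_smul, mul_comm, mul_left_comm, add_comm, add_left_comm]

lemma sub_add_helper {M : Type} [AddCommGroup M] {x1 x2 y1 y2 u1 u2 v1 v2 : M}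
    (h1 : x1 - y1 = u1 - v1) (h2 : x2 - y2 = u2 - v2) :
    (x1 + x2) - (y1 + y2) = (u1 + u2) - (v1 + v2) := by
  rw [← sub_add_sub_comm, ← sub_add_sub_comm, h1, h2]

lemma rsym_all (k : Type) [Field k] (x y z : Idx →₀ k) :
    mulL k (mulL k x y) z - mulL k x (mulL k y z)
    = mulL k (mulL k x z) y - mulL k x (mulL k z y) := by
  induction x using Finsupp.induction_linear with
  | zero => simp
  | add a b ha hb =>
      simp only [map_add, LinearMap.add_apply]
      exact sub_add_helper ha hb
  | single i c =>
    induction y using Finsupp.induction_linear with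
    | zero => simp
    | add a b ha hb =>
        simp only [map_add, LinearMap.add_apply]
        exact sub_add_helper ha hb
    | single j d =>
      induction z using Finsupp.induction_linear with
      | zero => simp
      | add a b ha hb =>
          simp only [map_add, LinearMap.add_apply]
          exact sub_add_helper ha hb
      | single l e => exact rsym_single k i j l c d e

/-- A bundled right-symmetric (pre-Lie) algebra over the field `k`. -/
structure PreLiePkg (k : Type) [Field k] where
  carrier : Type
  [grp : AddCommGroup carrier]
  [mod : Module k carrier]
  mul : carrier →ₗ[k] carrier →ₗ[k] carrier
  rsym : ∀ x y z : carrier,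
    mul (mul x y) z - mul x (mul y z) = mul (mul x z) y - mul x (mul z y)

attribute [instance] PreLiePkg.grp PreLiePkg.mod

/-- There exists a right-symmetric (pre-Lie) algebra `V` and a formal distribution
`a(z)` over `V` such that the pair `(a(z), a(z))` is local with locality value exactly 1
(`a(w)∘a(z)(w−z) = 0`, but `a(w)∘a(z) ≠ 0`), while the pair `(a(z), (a₍₀₎a)(z))`, where
`(a₍₀₎a)ₘ = a₀∘aₘ`, is not local: for every `N ∈ ℤ₊` the locality sums
`Σ_{s≥0} (−1)^s C(N,s) a_{n−s}∘(a₀∘a_{m+s})` do not all vanish. -/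
theorem stmt_16 (k : Type) [Field k] [CharZero k] :
    ∃ (P : PreLiePkg k) (a : ℤ → P.carrier),
      (∀ n m : ℤ, P.mul (a n) (a m) - P.mul (a (n - 1)) (a (m + 1)) = 0) ∧
      ¬ (∀ n m : ℤ, P.mul (a n) (a m) = 0) ∧
      ¬ ∃ N : ℕ, ∀ n m : ℤ, ∑ s ∈ Finset.range (N + 1),
          ((-1) ^ s * (N.choose s) : ℤ) •
            P.mul (a (n - (s : ℤ))) (P.mul (a 0) (a (m + (s : ℤ)))) = 0 := by
  refine ⟨⟨Idx →₀ k, mulL k, rsym_all k⟩, fun n => Finsupp.single (Sum.inl n) 1, ?_, ?_, ?_⟩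
  · intro n m
    simp only [mul_single, fb, one_mul, one_smul]
    rw [show n - 1 + (m + 1) = n + m by ring, sub_self]
  · intro h
    have := h 0 0
    simp only [mul_single, fb, one_mul, one_smul] at this
    exact one_ne_zero (Finsupp.single_eq_zero.mp this)
  · rintro ⟨N, hN⟩
    have h := hN 0 0
    have hterm : ∀ s : ℕ,
        mulL k (Finsupp.single (Sum.inl (0 - (s:ℤ))) (1:k))
          (mulL k (Finsupp.single (Sum.inl (0:ℤ)) 1)
            (Finsupp.single (Sum.inl ((0:ℤ) + s)) 1))
        = Finsupp.single (Sum.inr (Sum.inr (-(s:ℤ), (s:ℤ)))) (1:k) := by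
      intro s
      simp [mul_single, fb]
    rw [Finset.sum_congr rfl (fun s _ => by rw [hterm s])] at h
    have h2 := congrArg (fun g : Idx →₀ k => g (Sum.inr (Sum.inr ((0:ℤ), (0:ℤ))))) h
    simp only [Finsupp.coe_finset_sum, Finset.sum_apply, Finsupp.smul_apply,
      Finsupp.single_apply, Finsupp.coe_zero, Pi.zero_apply] at h2
    rw [Finset.sum_eq_single 0] at h2
    · simp at h2
    · intro s _ hs
      have hne : ¬ ((Sum.inr (Sum.inr (-(s:ℤ), (s:ℤ))) : Idx)
          = Sum.inr (Sum.inr ((0:ℤ),(0:ℤ)))) := by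
        intro heq
        simp only [Sum.inr.injEq, Prod.mk.injEq] at heq
        exact hs (by exact_mod_cast heq.2)
      rw [if_neg hne, smul_zero]
    · intro h'
      exact absurd (Finset.mem_range.mpr (Nat.succ_pos N)) h'
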